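/- arXiv:2407.03094 — 2 statements merged into one kernel-verified Lean document; each statement's English description precedes it below -/
import Mathlib

section
/- (Exchangeability coverage bound) Let S_1, …, S_{n+1} be exchangeable real random variables and α ∈ (0,1). Let q̂ be the ⌈(1-α)(n+1)⌉-th order statistic of S_1, …, S_n (with q̂ = ∞ if ⌈(1-α)(n+1)⌉ > n). Then P(S_{n+1} ≤ q̂) ≥ 1 - α. -/
open MeasureTheory Finset ENNReal


lemma rank_lem {ι : Type*} [Fintype ι] (v : ι → ℝ) (k : ℕ) (hk : k ≤ Fintype.card ι) :
    k ≤ (univ.filter fun j => (univ.filter fun i => v i < v j).card < k).card := by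
  classical
  by_contra h
  push_neg at h
  set B := univ.filter fun j => (univ.filter fun i => v i < v j).card < k with hB
  have hBc : (univ \ B).Nonempty := by
    rw [Finset.sdiff_nonempty]
    intro hsub
    have := Finset.card_le_card hsub
    simp only [Finset.card_univ] at this
    omega
  obtain ⟨j₀, hj₀, hmin⟩ := Finset.exists_min_image (univ \ B) v hBc
  have hj₀' : k ≤ (univ.filter fun i => v i < v j₀).card := by
    have h2 := (Finset.mem_sdiff.mp hj₀).2
    rw [hB] at h2
    simp only [Finset.mem_filter, Finset.mem_univ, true_and, not_lt] at h2
    exact h2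
  have hsub : (univ.filter fun i => v i < v j₀) ⊆ B := by
    intro i hi
    simp only [Finset.mem_filter, Finset.mem_univ, true_and] at hi
    by_contra hiB
    have hmem : i ∈ univ \ B := Finset.mem_sdiff.mpr ⟨Finset.mem_univ i, hiB⟩
    have := hmin i hmem
    linarith
  have := Finset.card_le_card hsub
  omega

lemma meas_count {m : ℕ} (j : Fin m) (k : ℕ) :
    MeasurableSet {v : Fin m → ℝ | k ≤ (univ.filter fun i => v i < v j).card} := by
  classical
  have heq : {v : Fin m → ℝ | k ≤ (univ.filter fun i => v i < v j).card}
      = ⋃ T : Finset (Fin m), ⋃ (_ : T.card = k), ⋂ i ∈ T, {v | v i < v j} := by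
    ext v
    simp only [Set.mem_setOf_eq, Set.mem_iUnion, Set.mem_iInter, Set.mem_setOf_eq]
    constructor
    · intro h
      obtain ⟨T, hTsub, hTcard⟩ := Finset.exists_subset_card_eq h
      exact ⟨T, hTcard, fun i hi => (Finset.mem_filter.mp (hTsub hi)).2⟩
    · rintro ⟨T, hTcard, hT⟩
      calc k = T.card := hTcard.symm
        _ ≤ _ := Finset.card_le_card fun i hi =>
            Finset.mem_filter.mpr ⟨Finset.mem_univ i, hT i hi⟩
  rw [heq]
  refine MeasurableSet.iUnion fun T => MeasurableSet.iUnion fun _ =>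
    MeasurableSet.biInter T.countable_toSet fun i _ => ?_
  exact measurableSet_lt (measurable_pi_apply i) (measurable_pi_apply j)

lemma perm_count {m : ℕ} (σ : Equiv.Perm (Fin m)) (v : Fin m → ℝ) (c : ℝ) :
    (univ.filter fun i => v (σ i) < c).card = (univ.filter fun i => v i < c).card := by
  classical
  apply Finset.card_bij (fun i _ => σ i)
  · intro a ha
    simp only [Finset.mem_filter, Finset.mem_univ, true_and] at ha ⊢
    exact ha
  · intro a _ b _ h
    exact σ.injective h
  · intro b hb
    simp only [Finset.mem_filter, Finset.mem_univ, true_and] at hb ⊢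
    exact ⟨σ.symm b, by simpa using hb, by simp⟩

/-- Finite-sample coverage of split conformal prediction under exchangeability:
with `q̂` the `⌈(1-α)(n+1)⌉`-th order statistic of the first `n` scores (`∞`, i.e. the
event holds trivially, if `⌈(1-α)(n+1)⌉ > n`), one has `P(S_{n+1} ≤ q̂) ≥ 1 - α`. -/
theorem exchangeability_coverage
    {Ω : Type*} [MeasurableSpace Ω] (μ : Measure Ω) [IsProbabilityMeasure μ]
    (n : ℕ) (S : Fin (n + 1) → Ω → ℝ) (hS : ∀ i, Measurable (S i))
    (hexch : ∀ σ : Equiv.Perm (Fin (n + 1)),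
        Measure.map (fun ω => fun i => S (σ i) ω) μ = Measure.map (fun ω => fun i => S i ω) μ)
    (α : ℝ) (hα : α ∈ Set.Ioo (0:ℝ) 1)
    -- `k` is the rank ⌈(1-α)(n+1)⌉ and `qhat ω` the k-th smallest of S_1 ω, …, S_n ω
    (k : ℕ) (hk : (k : ℝ) = ⌈(1 - α) * (n + 1)⌉)
    (qhat : Ω → ℝ)
    (hqhat : ∀ ω, qhat ω =
        sInf {t : ℝ | k ≤ ((univ : Finset (Fin n)).filter
          (fun i => S i.castSucc ω ≤ t)).card}) :
    ENNReal.ofReal (1 - α) ≤ μ {ω | n < k ∨ S (Fin.last n) ω ≤ qhat ω} := by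
  classical
  by_cases hkn : k ≤ n
  swap
  · -- trivial case: the event is everything
    have : {ω | n < k ∨ S (Fin.last n) ω ≤ qhat ω} = Set.univ := by
      ext ω; simp [Nat.lt_of_not_le hkn]
    rw [this, measure_univ]
    exact ENNReal.ofReal_le_one.mpr (by linarith [hα.1])
  -- main case
  set T : Ω → (Fin (n+1) → ℝ) := fun ω i => S i ω with hT_def
  have hT : Measurable T := measurable_pi_lambda _ hS
  set C : Fin (n+1) → Set (Fin (n+1) → ℝ) :=
    fun j => {v | (univ.filter fun i => v i < v j).card < k} with hC_def
  have hCmeas : ∀ j, MeasurableSet (C j) := by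
    intro j
    have : C j = {v : Fin (n+1) → ℝ | k ≤ (univ.filter fun i => v i < v j).card}ᶜ := by
      ext v; simp [hC_def]
    rw [this]
    exact (meas_count j k).compl
  set A : Fin (n+1) → Set Ω := fun j => T ⁻¹' C j with hA_def
  have hAmeas : ∀ j, MeasurableSet (A j) := fun j => hT (hCmeas j)
  -- Step 1 : A (last) ⊆ event
  have hincl : A (Fin.last n) ⊆ {ω | n < k ∨ S (Fin.last n) ω ≤ qhat ω} := by
    intro ω hω
    right
    have hcard : (univ.filter fun i : Fin (n+1) => S i ω < S (Fin.last n) ω).card < k := hω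
    rw [hqhat ω]
    apply le_csInf
    · -- nonempty
      obtain ⟨t₀, ht₀⟩ := Finite.exists_le (fun i : Fin n => S i.castSucc ω)
      refine ⟨t₀, ?_⟩
      have : (univ : Finset (Fin n)).filter (fun i => S i.castSucc ω ≤ t₀) = univ := by
        apply Finset.filter_true_of_mem; intro i _; exact ht₀ i
      simp only [Set.mem_setOf_eq, this, Finset.card_univ, Fintype.card_fin]
      exact hkn
    · intro t ht
      simp only [Set.mem_setOf_eq] at ht
      by_contra hlt
      push_neg at hlt
      have hsub : ∀ i ∈ (univ : Finset (Fin n)).filter (fun i => S i.castSucc ω ≤ t),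
          i.castSucc ∈ (univ : Finset (Fin (n+1))).filter
            (fun i => S i ω < S (Fin.last n) ω) := by
        intro i hi
        simp only [Finset.mem_filter, Finset.mem_univ, true_and] at hi ⊢
        linarith
      have hinj := Finset.card_le_card_of_injOn _ hsub
        (fun a _ b _ h => Fin.castSucc_injective n h)
      omega
  -- Step 2 : exchangeability gives μ (A j) = μ (A last)
  have hAeq : ∀ j, μ (A j) = μ (A (Fin.last n)) := by
    intro j
    set σ : Equiv.Perm (Fin (n+1)) := Equiv.swap j (Fin.last n) with hσ
    have hpre : T ⁻¹' C j = (fun ω => fun i => S (σ i) ω) ⁻¹' C (Fin.last n) := by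
      ext ω
      simp only [Set.mem_preimage, hC_def, Set.mem_setOf_eq]
      have hσlast : σ (Fin.last n) = j := Equiv.swap_apply_right _ _
      have hcards : (univ.filter fun i => S (σ i) ω < S (σ (Fin.last n)) ω).card
          = (univ.filter fun i => S i ω < S j ω).card := by
        rw [hσlast]; exact perm_count σ (fun i => S i ω) (S j ω)
      have hTc : (univ.filter fun i => T ω i < T ω j).card
          = (univ.filter fun i => S i ω < S j ω).card := rfl
      rw [hTc, hcards]
    have hmeasσ : Measurable (fun ω => fun i => S (σ i) ω) :=
      measurable_pi_lambda _ (fun i => hS (σ i))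
    calc μ (A j) = μ ((fun ω => fun i => S (σ i) ω) ⁻¹' C (Fin.last n)) := by
          rw [hA_def]; exact congrArg μ hpre
      _ = Measure.map (fun ω => fun i => S (σ i) ω) μ (C (Fin.last n)) :=
          (Measure.map_apply hmeasσ (hCmeas _)).symm
      _ = Measure.map (fun ω => fun i => S i ω) μ (C (Fin.last n)) := by rw [hexch σ]
      _ = μ (A (Fin.last n)) := Measure.map_apply hT (hCmeas _)
  -- Step 3 : pointwise rank bound and integration
  have hpt : ∀ ω, (k : ℝ≥0∞) ≤ ∑ j : Fin (n+1), (A j).indicator (1 : Ω → ℝ≥0∞) ω := by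
    intro ω
    have hcount := rank_lem (fun i => S i ω) k (by simp; omega)
    calc (k : ℝ≥0∞)
        ≤ ((univ.filter fun j : Fin (n+1) =>
            (univ.filter fun i => S i ω < S j ω).card < k).card : ℝ≥0∞) := by
          exact_mod_cast hcount
      _ = ∑ j : Fin (n+1), (A j).indicator (1 : Ω → ℝ≥0∞) ω := by
          rw [Finset.card_filter]
          push_cast
          apply Finset.sum_congr rfl
          intro j _
          by_cases hj : ω ∈ A j
          · have : (univ.filter fun i => S i ω < S j ω).card < k := hj
            simp [Set.indicator_of_mem hj, this]
          · have : ¬ (univ.filter fun i => S i ω < S j ω).card < k := hj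
            simp [Set.indicator_of_notMem hj, this]
  have hsum : (k : ℝ≥0∞) ≤ ∑ j : Fin (n+1), μ (A j) := by
    have h1 : ∑ j : Fin (n+1), μ (A j)
        = ∫⁻ ω, ∑ j : Fin (n+1), (A j).indicator (1 : Ω → ℝ≥0∞) ω ∂μ := by
      rw [lintegral_finset_sum _ (fun j _ => (measurable_one.indicator (hAmeas j)))]
      congr 1
      ext j
      rw [lintegral_indicator_one (hAmeas j)]
    calc (k : ℝ≥0∞) = ∫⁻ _, (k : ℝ≥0∞) ∂μ := by simp
      _ ≤ ∫⁻ ω, ∑ j : Fin (n+1), (A j).indicator (1 : Ω → ℝ≥0∞) ω ∂μ :=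
          lintegral_mono hpt
      _ = ∑ j : Fin (n+1), μ (A j) := h1.symm
  have hsum2 : (k : ℝ≥0∞) ≤ (n+1 : ℝ≥0∞) * μ (A (Fin.last n)) := by
    calc (k : ℝ≥0∞) ≤ ∑ j : Fin (n+1), μ (A j) := hsum
      _ = ∑ _j : Fin (n+1), μ (A (Fin.last n)) := Finset.sum_congr rfl (fun j _ => hAeq j)
      _ = (n+1 : ℝ≥0∞) * μ (A (Fin.last n)) := by
          rw [Finset.sum_const, Finset.card_univ, Fintype.card_fin, nsmul_eq_mul]
          push_cast; ring
  -- Step 4 : conclude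
  have hfinal : ENNReal.ofReal (1 - α) ≤ μ (A (Fin.last n)) := by
    have hdiv : (k : ℝ≥0∞) / (n+1 : ℝ≥0∞) ≤ μ (A (Fin.last n)) := by
      rw [ENNReal.div_le_iff_le_mul (Or.inl (by simp)) (Or.inl (by simp))]
      rw [mul_comm] at hsum2
      exact hsum2
    refine le_trans ?_ hdiv
    have hle : (1 - α) ≤ (k : ℝ) / (n+1 : ℝ) := by
      rw [le_div_iff₀ (by positivity), hk]
      exact Int.le_ceil _
    calc ENNReal.ofReal (1 - α) ≤ ENNReal.ofReal ((k : ℝ) / (n+1 : ℝ)) :=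
        ENNReal.ofReal_le_ofReal hle
      _ = (k : ℝ≥0∞) / (n+1 : ℝ≥0∞) := by
        rw [ENNReal.ofReal_div_of_pos (by positivity)]
        congr 1
        · exact ENNReal.ofReal_natCast k
        · rw [ENNReal.ofReal_add (by positivity) zero_le_one]
          simp [ENNReal.ofReal_natCast]
  exact hfinal.trans (measure_mono hincl)
end

section
/- (Monotonicity of S ↦ η_{n+1}^S) In the dual problem max_{η ∈ [-α,1-α]^{n+1}} min_{g ∈ 𝓕} Σ_{i=1}^n η_i (S_i - g(a_i,x_i)) + η_{n+1}(S - g(a_{n+1},x_{n+1})) over a class 𝓕 of nonnegative functions, the optimal multiplier η_{n+1}^S is non-decreasing as a function of the imputed score S. -/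
open Finset

/-- One direction of the shift identity for `sInf` over real coercions in `EReal`. -/
lemma ereal_sInf_shift_le {ι : Type*} (A : Set ι) (f : ι → ℝ) (c : ℝ) :
    sInf {e : EReal | ∃ g ∈ A, e = ((f g : ℝ) : EReal)} + (c : EReal)
      ≤ sInf {e : EReal | ∃ g ∈ A, e = ((f g + c : ℝ) : EReal)} := by
  refine le_sInf fun e he => ?_
  obtain ⟨g, hg, rfl⟩ := he
  rw [EReal.coe_add]
  have hm : ((f g : ℝ) : EReal) ∈ {e : EReal | ∃ g' ∈ A, e = ((f g' : ℝ) : EReal)} :=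
    ⟨g, hg, rfl⟩
  exact add_le_add_left (sInf_le hm) _

/-- Shifting every element of a set of real coercions by a real constant shifts the `sInf`. -/
lemma ereal_sInf_shift {ι : Type*} (A : Set ι) (f : ι → ℝ) (c : ℝ) :
    sInf {e : EReal | ∃ g ∈ A, e = ((f g + c : ℝ) : EReal)}
      = sInf {e : EReal | ∃ g ∈ A, e = ((f g : ℝ) : EReal)} + (c : EReal) := by
  refine le_antisymm ?_ (ereal_sInf_shift_le A f c)
  have h := ereal_sInf_shift_le A (fun g => f g + c) (-c)
  simp only [add_neg_cancel_right] at h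
  have h' : sInf {e : EReal | ∃ g ∈ A, e = ((f g + c : ℝ) : EReal)} - (c : EReal)
      ≤ sInf {e : EReal | ∃ g ∈ A, e = ((f g : ℝ) : EReal)} := by
    rwa [sub_eq_add_neg, ← EReal.coe_neg]
  exact (EReal.sub_le_iff_le_add (Or.inl (EReal.coe_ne_bot c))
    (Or.inl (EReal.coe_ne_top c))).mp h'

/-- Monotonicity of the optimal dual multiplier `η_{n+1}^S` in the imputed score `S`
(Lemma of Gibbs et al.): choosing at each `S` a maximizer of the dual whose last
coordinate is maximal, the map `S ↦ η_{n+1}^S` is non-decreasing. -/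
theorem dual_multiplier_monotone
    {Z : Type*} (F : Set (Z → ℝ)) (hFnn : ∀ g ∈ F, ∀ z, 0 ≤ g z)
    (n : ℕ) (z : Fin (n + 1) → Z) (Sc : Fin n → ℝ)
    (α : ℝ) (hα : α ∈ Set.Ioo (0:ℝ) 1)
    -- the dual objective for imputed score S and multipliers η
    (D : ℝ → (Fin (n + 1) → ℝ) → EReal)
    (hD : ∀ S η, D S η = sInf {e : EReal | ∃ g ∈ F,
        e = ((∑ i : Fin n, η i.castSucc * (Sc i - g (z i.castSucc)) +
              η (Fin.last n) * (S - g (z (Fin.last n))) : ℝ) : EReal)})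
    (S S' : ℝ) (hSS' : S ≤ S')
    (η η' : Fin (n + 1) → ℝ)
    (hbox : ∀ i, η i ∈ Set.Icc (-α) (1 - α))
    (hbox' : ∀ i, η' i ∈ Set.Icc (-α) (1 - α))
    -- η maximizes the dual at S, with maximal last coordinate among maximizers
    (hmax : ∀ η₂ : Fin (n + 1) → ℝ, (∀ i, η₂ i ∈ Set.Icc (-α) (1 - α)) → D S η₂ ≤ D S η)
    (htie : ∀ η₂ : Fin (n + 1) → ℝ, (∀ i, η₂ i ∈ Set.Icc (-α) (1 - α)) →
        D S η₂ = D S η → η₂ (Fin.last n) ≤ η (Fin.last n))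
    -- η' maximizes the dual at S', with maximal last coordinate among maximizers
    (hmax' : ∀ η₂ : Fin (n + 1) → ℝ, (∀ i, η₂ i ∈ Set.Icc (-α) (1 - α)) → D S' η₂ ≤ D S' η')
    (htie' : ∀ η₂ : Fin (n + 1) → ℝ, (∀ i, η₂ i ∈ Set.Icc (-α) (1 - α)) →
        D S' η₂ = D S' η' → η₂ (Fin.last n) ≤ η' (Fin.last n)) :
    η (Fin.last n) ≤ η' (Fin.last n) := by
  rcases hSS'.eq_or_lt with heq | hlt
  · subst heq
    exact htie' η hbox (le_antisymm (hmax' η hbox) (hmax η' hbox'))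
  -- the shift identity for the dual objective
  have key : ∀ (τ : Fin (n + 1) → ℝ),
      D S' τ = D S τ + ((τ (Fin.last n) * (S' - S) : ℝ) : EReal) := by
    intro τ
    rw [hD, hD]
    have h := ereal_sInf_shift F
      (fun g => ∑ i : Fin n, τ i.castSucc * (Sc i - g (z i.castSucc)) +
          τ (Fin.last n) * (S - g (z (Fin.last n)))) (τ (Fin.last n) * (S' - S))
    rw [← h]
    congr 1
    ext e
    constructor
    · rintro ⟨g, hg, rfl⟩
      exact ⟨g, hg, by rw [show (∑ i : Fin n, τ i.castSucc * (Sc i - g (z i.castSucc)) +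
          τ (Fin.last n) * (S' - g (z (Fin.last n)))) =
          (∑ i : Fin n, τ i.castSucc * (Sc i - g (z i.castSucc)) +
          τ (Fin.last n) * (S - g (z (Fin.last n)))) + τ (Fin.last n) * (S' - S) from by ring]⟩
    · rintro ⟨g, hg, rfl⟩
      exact ⟨g, hg, by rw [show (∑ i : Fin n, τ i.castSucc * (Sc i - g (z i.castSucc)) +
          τ (Fin.last n) * (S - g (z (Fin.last n)))) + τ (Fin.last n) * (S' - S) =
          (∑ i : Fin n, τ i.castSucc * (Sc i - g (z i.castSucc)) +
          τ (Fin.last n) * (S' - g (z (Fin.last n)))) from by ring]⟩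
  have h1 := key η
  have h2 := key η'
  have hA : D S η' ≤ D S η := hmax η' hbox'
  have hB : D S' η ≤ D S' η' := hmax' η hbox
  by_cases hbot : D S η = ⊥
  · -- everything collapses to ⊥; use the tie-breaking rule at S'
    have hA' : D S η' = ⊥ := le_bot_iff.mp (hbot ▸ hA)
    have h2' : D S' η' = ⊥ := by rw [h2, hA', EReal.bot_add]
    have h1' : D S' η = ⊥ := le_bot_iff.mp (h2' ▸ hB)
    exact htie' η hbox (h1'.trans h2'.symm)
  by_cases htop : D S η = ⊤
  · have h1' : D S' η = ⊤ := by rw [h1, htop, EReal.top_add_coe]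
    have hB' : D S' η' = ⊤ := top_le_iff.mp (h1' ▸ hB)
    exact htie' η hbox (h1'.trans hB'.symm)
  -- real case: standard exchange argument
  obtain ⟨r, hr⟩ : ∃ r : ℝ, D S η = (r : EReal) :=
    ⟨(D S η).toReal, (EReal.coe_toReal htop hbot).symm⟩
  have chain : D S η + ((η (Fin.last n) * (S' - S) : ℝ) : EReal)
      ≤ D S η + ((η' (Fin.last n) * (S' - S) : ℝ) : EReal) := by
    calc D S η + ((η (Fin.last n) * (S' - S) : ℝ) : EReal) = D S' η := h1.symm
      _ ≤ D S' η' := hB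
      _ = D S η' + ((η' (Fin.last n) * (S' - S) : ℝ) : EReal) := h2
      _ ≤ D S η + ((η' (Fin.last n) * (S' - S) : ℝ) : EReal) := add_le_add_left hA _
  rw [hr, ← EReal.coe_add, ← EReal.coe_add, EReal.coe_le_coe_iff] at chain
  have hd : (0:ℝ) < S' - S := by linarith
  nlinarith [chain]
end
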